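/- arXiv:1401.0378 — 4 statements merged into one kernel-verified Lean document; each statement's English description precedes it below -/
import Mathlib

section
/- Let (g, [·,…,·]) be an n-ary Nambu-Lie superalgebra and ρ: g → g an even algebra endomorphism (ρ[x₁,…,xₙ] = [ρ(x₁),…,ρ(xₙ)]). Then g equipped with the twisted bracket [x₁,…,xₙ]_ρ := ρ([x₁,…,xₙ]) and the twisting map ρ is an n-ary multiplicative Hom-Nambu-Lie superalgebra. -/
open scoped BigOperators

universe u v w

variable (K : Type u) [Field K]

/-- The sign `(-1)^(a·b)` for `a b : ZMod 2`. -/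
def sgn (a b : ZMod 2) : K := if a = 1 ∧ b = 1 then -1 else 1

/-- Sum of the degrees with index strictly below `i`. -/
def psum {m : ℕ} (d : Fin m → ZMod 2) (i : Fin m) : ZMod 2 :=
  ∑ j ∈ Finset.univ.filter (fun j => j < i), d j

/-- Sum of the degrees with index strictly above `i`. -/
def ssum {m : ℕ} (d : Fin m → ZMod 2) (i : Fin m) : ZMod 2 :=
  ∑ j ∈ Finset.univ.filter (fun j => i < j), d j

/-- Raw data of an `(n+2)`-ary algebra with a `ZMod 2`-grading and a twisting map:
a grading by submodules forming an internal direct sum, an `(n+2)`-linear bracket and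
a linear map `α`. -/
structure NData (n : ℕ) (g : Type v) [AddCommGroup g] [Module K g] where
  G : ZMod 2 → Submodule K g
  internal : DirectSum.IsInternal G
  br : MultilinearMap K (fun _ : Fin (n + 2) => g) g
  α : g →ₗ[K] g

namespace NData

variable {K} {n : ℕ} {g : Type v} [AddCommGroup g] [Module K g] (A : NData K n g)

/-- A tuple is homogeneous with (componentwise) degrees `d`. -/
def Homog {m : ℕ} (x : Fin m → g) (d : Fin m → ZMod 2) : Prop := ∀ i, x i ∈ A.G (d i)

/-- Action of a fundamental object (an `(n+1)`-tuple) on an element. -/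
def act (x : Fin (n + 1) → g) (z : g) : g := A.br (Fin.snoc x z)

/-- The `i`-th component tuple of the bracket `[x,y]_α` of fundamental objects:
`α y₁ ∧ ⋯ ∧ (x · yᵢ) ∧ ⋯ ∧ α y_{n+1}`. -/
def comp (x y : Fin (n + 1) → g) (i : Fin (n + 1)) : Fin (n + 1) → g :=
  Function.update (fun k => A.α (y k)) i (A.act x (y i))

/-- The bracket is even. -/
def BrEven : Prop := ∀ (d : Fin (n + 2) → ZMod 2) (x : Fin (n + 2) → g),
  A.Homog x d → A.br x ∈ A.G (∑ i, d i)

/-- The bracket is super-skew-symmetric in adjacent arguments. -/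
def BrSkew : Prop := ∀ (d : Fin (n + 2) → ZMod 2) (x : Fin (n + 2) → g), A.Homog x d →
  ∀ i j : Fin (n + 2), (i : ℕ) + 1 = (j : ℕ) →
    A.br (x ∘ Equiv.swap i j) = -(sgn K (d i) (d j) • A.br x)

/-- `α` is even. -/
def AlphaEven : Prop := ∀ (d : ZMod 2) (x : g), x ∈ A.G d → A.α x ∈ A.G d

/-- `α` is multiplicative with respect to the bracket. -/
def Mult : Prop := ∀ x : Fin (n + 2) → g, A.α (A.br x) = A.br fun i => A.α (x i)

/-- The graded Filippov (fundamental) identity. -/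
def Filippov : Prop := ∀ (dx : Fin (n + 1) → ZMod 2) (dy : Fin (n + 2) → ZMod 2)
    (x : Fin (n + 1) → g) (y : Fin (n + 2) → g), A.Homog x dx → A.Homog y dy →
  A.act x (A.br y) = ∑ i, sgn K (∑ k, dx k) (psum dy i) •
    A.br (Function.update y i (A.act x (y i)))

/-- The `α`-twisted graded Filippov identity. -/
def HomFilippov : Prop := ∀ (dx : Fin (n + 1) → ZMod 2) (dy : Fin (n + 2) → ZMod 2)
    (x : Fin (n + 1) → g) (y : Fin (n + 2) → g), A.Homog x dx → A.Homog y dy →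
  A.act (fun k => A.α (x k)) (A.br y) = ∑ i, sgn K (∑ k, dx k) (psum dy i) •
    A.br (Function.update (fun k => A.α (y k)) i (A.act x (y i)))

/-- `(g,[·,…,·])` is an `(n+2)`-ary Nambu-Lie superalgebra (the map `α` is irrelevant). -/
def IsNambuLieSuper : Prop := A.BrEven ∧ A.BrSkew ∧ A.Filippov

/-- `(g,[·,…,·],α)` is an `(n+2)`-ary multiplicative Hom-Nambu-Lie superalgebra. -/
def IsHomNambuLieSuper : Prop :=
  A.BrEven ∧ A.BrSkew ∧ A.AlphaEven ∧ A.Mult ∧ A.HomFilippov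

/-- The action of the bracket `[x,y]_α` of two fundamental objects on an element `z`,
where `dx` is the total degree of `x` and `dy` the componentwise degrees of `y`. -/
def wbrAct (dx : ZMod 2) (dy : Fin (n + 1) → ZMod 2) (x y : Fin (n + 1) → g) (z : g) : g :=
  ∑ i, sgn K dx (psum dy i) • A.act (A.comp x y i) z

/-- `(ρ, ν, GV)` is a graded representation of `A` on `V`. -/
def IsRep {V : Type w} [AddCommGroup V] [Module K V]
    (ρ : MultilinearMap K (fun _ : Fin (n + 1) => g) (Module.End K V))
    (ν : Module.End K V) (GV : ZMod 2 → Submodule K V) : Prop :=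
  (∀ (d : Fin (n + 1) → ZMod 2) (x : Fin (n + 1) → g), A.Homog x d →
    ∀ (β : ZMod 2) (v : V), v ∈ GV β → ρ x v ∈ GV (β + ∑ i, d i)) ∧
  (∀ (dx dy : Fin (n + 1) → ZMod 2) (x y : Fin (n + 1) → g), A.Homog x dx → A.Homog y dy →
    ρ (fun k => A.α (x k)) * ρ y
      = sgn K (∑ i, dx i) (∑ i, dy i) • (ρ (fun k => A.α (y k)) * ρ x)
        + (∑ i, sgn K (∑ k, dx k) (psum dy i) • ρ (A.comp x y i)) * ν) ∧
  (∀ (dx : Fin n → ZMod 2) (dy : Fin (n + 2) → ZMod 2) (x : Fin n → g) (y : Fin (n + 2) → g),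
    A.Homog x dx → A.Homog y dy →
    ρ (Fin.snoc (fun k => A.α (x k)) (A.br y)) * ν
      = ∑ i : Fin (n + 2), ((-1 : K) ^ (n + 1 - (i : ℕ))
          * sgn K (∑ k, dx k) ((∑ k, dy k) + dy i)
          * sgn K (dy i) (ssum dy i)) •
        (ρ (fun k => A.α (y (i.succAbove k))) * ρ (Fin.snoc x (y i))))

/-- The adjoint action of a fundamental object, as an endomorphism of `g`. -/
def adE : MultilinearMap K (fun _ : Fin (n + 1) => g) (Module.End K g) :=
  A.br.curryRight

/-- The degree-`d` part of the graded dual space: functionals vanishing on the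
component of the other degree. -/
def dualG (d : ZMod 2) : Submodule K (Module.Dual K g) where
  carrier := {f | ∀ x ∈ A.G (d + 1), f x = 0}
  add_mem' := by
    intro a b ha hb x hx
    simp [ha x hx, hb x hx]
  zero_mem' := by intro x _; simp
  smul_mem' := by
    intro c f hf x hx
    simp [hf x hx]

/-- The coadjoint action `ad*(x)(φ) = -(-1)^{|x||φ|} φ ∘ ad(x)`, with the degrees
`dx` of `x` and `df` of `φ` given explicitly. -/
def coad (dx df : ZMod 2) (x : Fin (n + 1) → g) (φ : Module.Dual K g) : Module.Dual K g :=
  -(sgn K dx df) • (φ ∘ₗ (A.adE x : g →ₗ[K] g))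

/-- The grading of `g ⊕ g*`. -/
def tG (d : ZMod 2) : Submodule K (g × Module.Dual K g) := (A.G d).prod (A.dualG d)

/-- The twist map `α'(x+f) = α(x) + f ∘ α` of the `T*`-extension. -/
def tα : (g × Module.Dual K g) →ₗ[K] g × Module.Dual K g :=
  LinearMap.prodMap A.α A.α.dualMap

/-- The bracket of the `T*`-extension by `θ`, on tuples with degree annotations `d`. -/
def tbr (θ : (Fin (n + 2) → g) → Module.Dual K g) (d : Fin (n + 2) → ZMod 2)
    (p : Fin (n + 2) → g × Module.Dual K g) : g × Module.Dual K g :=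
  (A.br (fun i => (p i).1),
   θ (fun i => (p i).1)
     + ∑ i : Fin (n + 2), ((-1 : K) ^ (n + 1 - (i : ℕ)) * sgn K (d i) (ssum d i)) •
         A.coad ((∑ k, d k) + d i) (d i) (fun k => (p (i.succAbove k)).1) ((p i).2))

/-- The canonical pairing `⟨x+f, y+h⟩ = f(y) + (-1)^{|x+f||y+h|} h(x)` on `g ⊕ g*`,
with the degrees given explicitly. -/
def tpair (_A : NData K n g) (d₁ d₂ : ZMod 2) (u v : g × Module.Dual K g) : K :=
  u.2 v.1 + sgn K d₁ d₂ * v.2 u.1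

/-- The coboundary of a `1`-cochain with values in the dual module (with the coadjoint
action), on homogeneous arguments with the indicated degrees. -/
def tdelta (θ : (Fin (n + 2) → g) → Module.Dual K g)
    (dx : Fin (n + 1) → ZMod 2) (dY : Fin (n + 2) → ZMod 2)
    (x : Fin (n + 1) → g) (Y : Fin (n + 2) → g) : Module.Dual K g :=
  θ (Fin.snoc (fun k => A.α (x k)) (A.br Y))
    + A.coad (∑ k, dx k) (∑ k, dY k) (fun k => A.α (x k)) (θ Y)
    - ∑ i, sgn K (∑ k, dx k) (psum dY i) •
        θ (Function.update (fun k => A.α (Y k)) i (A.act x (Y i)))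
    - ∑ i : Fin (n + 2), (sgn K (∑ k, dx k) (psum dY i) * (-1 : K) ^ (n + 1 - (i : ℕ))
          * sgn K ((∑ k, dx k) + dY i) (ssum dY i)) •
        A.coad ((∑ k, dY k) + dY i) ((∑ k, dx k) + dY i)
          (fun k => A.α (Y (i.succAbove k))) (θ (Fin.snoc x (Y i)))

/-- `θ` is an even `1`-supercocycle with values in `g*`:
it is even, equivariant, super-skew-symmetric and `δθ = 0`. -/
def TZ1 (θ : (Fin (n + 2) → g) → Module.Dual K g) : Prop :=
  (∀ (d : Fin (n + 2) → ZMod 2) (p : Fin (n + 2) → g), A.Homog p d →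
      θ p ∈ A.dualG (∑ i, d i)) ∧
  (∀ p : Fin (n + 2) → g, θ (fun i => A.α (p i)) = (θ p).comp A.α) ∧
  (∀ (d : Fin (n + 2) → ZMod 2) (p : Fin (n + 2) → g), A.Homog p d →
      ∀ i j : Fin (n + 2), (i : ℕ) + 1 = (j : ℕ) →
        θ (p ∘ Equiv.swap i j) = -(sgn K (d i) (d j) • θ p)) ∧
  (∀ (dx : Fin (n + 1) → ZMod 2) (dY : Fin (n + 2) → ZMod 2)
      (x : Fin (n + 1) → g) (Y : Fin (n + 2) → g), A.Homog x dx → A.Homog Y dY →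
        A.tdelta θ dx dY x Y = 0)

/-- The cyclicity condition `θ(x,y)(z) + (-1)^{|y||z|} θ(x,z)(y) = 0`. -/
def TCyclic (θ : (Fin (n + 2) → g) → Module.Dual K g) : Prop :=
  ∀ (dx : Fin (n + 1) → ZMod 2) (dy dz : ZMod 2) (x : Fin (n + 1) → g) (y z : g),
    A.Homog x dx → y ∈ A.G dy → z ∈ A.G dz →
      θ (Fin.snoc x y) z + sgn K dy dz * θ (Fin.snoc x z) y = 0

/-- `I` is a Hom-ideal: stable under `α` and absorbing in the first slot. -/
def IsHomIdeal (I : Submodule K g) : Prop :=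
  (∀ x ∈ I, A.α x ∈ I) ∧ ∀ p : Fin (n + 2) → g, p 0 ∈ I → A.br p ∈ I

/-- `I` is a graded subspace: it is spanned by its homogeneous elements. -/
def IsGradedSub (I : Submodule K g) : Prop :=
  I ≤ Submodule.span K ((I : Set g) ∩ ((A.G 0 : Set g) ∪ (A.G 1 : Set g)))

/-- The orthogonal space of `S` with respect to a bilinear form `B`. -/
def perpB (_A : NData K n g) (B : g →ₗ[K] g →ₗ[K] K) (S : Submodule K g) : Submodule K g where
  carrier := {x | ∀ y ∈ S, B x y = 0}
  add_mem' := by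
    intro a b ha hb y hy
    simp [ha y hy, hb y hy]
  zero_mem' := by intro y _; simp
  smul_mem' := by
    intro c x hx y hy
    simp [hx y hy]

/-- `B` is a metric on `A`: nondegenerate, supersymmetric, consistent, invariant, and
`α` is `B`-symmetric. -/
def IsMetric (B : g →ₗ[K] g →ₗ[K] K) : Prop :=
  (∀ x : g, (∀ y : g, B x y = 0) → x = 0) ∧
  (∀ (dx dy : ZMod 2) (x y : g), x ∈ A.G dx → y ∈ A.G dy →
      B x y = sgn K dx dy * B y x) ∧
  (∀ (dx dy : ZMod 2) (x y : g), x ∈ A.G dx → y ∈ A.G dy → dx ≠ dy → B x y = 0) ∧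
  (∀ (dx : Fin (n + 1) → ZMod 2) (dy : ZMod 2) (x : Fin (n + 1) → g) (y z : g),
      A.Homog x dx → y ∈ A.G dy →
        B (A.act x y) z = -(sgn K (∑ i, dx i) dy * B y (A.act x z))) ∧
  (∀ x y : g, B (A.α x) y = B (A.α y) x)

/-- `[S, g, …, g]` (ideal-type product, `S` in the first slot). -/
def brFirst (S : Submodule K g) : Submodule K g :=
  Submodule.span K {y | ∃ p : Fin (n + 2) → g, p 0 ∈ S ∧ y = A.br p}

/-- `[g, …, g, S]` (`S` in the last slot). -/
def brLast (S : Submodule K g) : Submodule K g :=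
  Submodule.span K {y | ∃ p : Fin (n + 2) → g, p (Fin.last (n + 1)) ∈ S ∧ y = A.br p}

/-- `[S, …, S]` (all slots in `S`). -/
def brAll (S : Submodule K g) : Submodule K g :=
  Submodule.span K {y | ∃ p : Fin (n + 2) → g, (∀ i, p i ∈ S) ∧ y = A.br p}

/-- The lower central series: `lcs 0 = g = g¹`, `lcs m = g^{m+1}`. -/
def lcs (m : ℕ) : Submodule K g := Nat.rec ⊤ (fun _ ih => A.brFirst ih) m

/-- The derived series: `ds 0 = g = g^{(0)}`, `ds m = g^{(m)}`. -/
def ds (m : ℕ) : Submodule K g := Nat.rec ⊤ (fun _ ih => A.brAll ih) m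

/-- `C(V) = {x | [x,g,…,g] ⊆ V}`. -/
def cv (S : Submodule K g) : Submodule K g where
  carrier := {x | ∀ p : Fin (n + 2) → g, A.br (Function.update p 0 x) ∈ S}
  add_mem' := by
    intro a b ha hb p
    rw [A.br.map_update_add]
    exact S.add_mem (ha p) (hb p)
  zero_mem' := by
    intro p
    rw [A.br.map_update_zero]
    exact S.zero_mem
  smul_mem' := by
    intro c x hx p
    rw [A.br.map_update_smul]
    exact S.smul_mem c (hx p)

/-- The ascending series `C₀(g) = 0`, `C_{i+1}(g) = C(Cᵢ(g))`. -/
def cs (m : ℕ) : Submodule K g := Nat.rec ⊥ (fun _ ih => A.cv ih) m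

/-- `g` is nilpotent of length exactly `k` (with the convention `g¹ = g = lcs 0`). -/
def NilpLength (k : ℕ) : Prop :=
  1 ≤ k ∧ A.lcs (k - 1) = ⊥ ∧ ∀ j, 1 ≤ j → j < k → A.lcs (j - 1) ≠ ⊥

/-- `g` is solvable of length exactly `k`. -/
def SolvLength (k : ℕ) : Prop :=
  A.ds k = ⊥ ∧ ∀ j < k, A.ds j ≠ ⊥

/-- `[S, T*g, …, T*g]_θ`-type span for the `T*`-extension, `S` in the first slot,
over homogeneous annotated tuples. -/
def tbrFirst (θ : (Fin (n + 2) → g) → Module.Dual K g)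
    (S : Submodule K (g × Module.Dual K g)) : Submodule K (g × Module.Dual K g) :=
  Submodule.span K {u | ∃ (d : Fin (n + 2) → ZMod 2) (p : Fin (n + 2) → g × Module.Dual K g),
    (∀ i, p i ∈ A.tG (d i)) ∧ p 0 ∈ S ∧ u = A.tbr θ d p}

/-- All-slots bracket span for the `T*`-extension, over homogeneous annotated tuples. -/
def tbrAll (θ : (Fin (n + 2) → g) → Module.Dual K g)
    (S : Submodule K (g × Module.Dual K g)) : Submodule K (g × Module.Dual K g) :=
  Submodule.span K {u | ∃ (d : Fin (n + 2) → ZMod 2) (p : Fin (n + 2) → g × Module.Dual K g),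
    (∀ i, p i ∈ A.tG (d i)) ∧ (∀ i, p i ∈ S) ∧ u = A.tbr θ d p}

/-- Lower central series of the `T*`-extension. -/
def tlcs (θ : (Fin (n + 2) → g) → Module.Dual K g) (m : ℕ) :
    Submodule K (g × Module.Dual K g) := Nat.rec ⊤ (fun _ ih => A.tbrFirst θ ih) m

/-- Derived series of the `T*`-extension. -/
def tds (θ : (Fin (n + 2) → g) → Module.Dual K g) (m : ℕ) :
    Submodule K (g × Module.Dual K g) := Nat.rec ⊤ (fun _ ih => A.tbrAll θ ih) m

/-- Nilpotency length of the `T*`-extension. -/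
def TNilpLength (θ : (Fin (n + 2) → g) → Module.Dual K g) (k : ℕ) : Prop :=
  1 ≤ k ∧ A.tlcs θ (k - 1) = ⊥ ∧ ∀ j, 1 ≤ j → j < k → A.tlcs θ (j - 1) ≠ ⊥

/-- Solvability length of the `T*`-extension. -/
def TSolvLength (θ : (Fin (n + 2) → g) → Module.Dual K g) (k : ℕ) : Prop :=
  A.tds θ k = ⊥ ∧ ∀ j < k, A.tds θ j ≠ ⊥

end NData

/-- If `(g,[·,…,·])` is an `n`-ary Nambu-Lie superalgebra and `ρ = A.α`
is an even endomorphism of it, then `g` with the twisted bracket `ρ ∘ [·,…,·]` and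
twisting map `ρ` is an `n`-ary multiplicative Hom-Nambu-Lie superalgebra. -/
theorem twist_of_endomorphism {K : Type u} [Field K] {n : ℕ} {g : Type v}
    [AddCommGroup g] [Module K g] (A : NData K n g)
    (hNLS : A.IsNambuLieSuper) (hρeven : A.AlphaEven)
    (hρmult : ∀ x : Fin (n + 2) → g, A.α (A.br x) = A.br fun i => A.α (x i)) :
    NData.IsHomNambuLieSuper { A with br := A.α.compMultilinearMap A.br } := by
  obtain ⟨hEven, hSkew, hFil⟩ := hNLS
  have hsnoc : ∀ (x : Fin (n + 1) → g) (z : g),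
      (Fin.snoc (fun k => A.α (x k)) (A.α z) : Fin (n+2) → g)
        = fun i => A.α ((Fin.snoc x z : Fin (n+2) → g) i) := by
    intro x z
    funext i
    refine Fin.lastCases ?_ ?_ i <;> simp
  refine ⟨?_, ?_, hρeven, ?_, ?_⟩
  · intro d x hx
    exact hρeven _ _ (hEven d x hx)
  · intro d x hx i j hij
    have := hSkew d x hx i j hij
    show A.α (A.br (x ∘ Equiv.swap i j)) = _
    rw [this]
    simp
  · intro x
    show A.α (A.α (A.br x)) = A.α (A.br fun i => A.α (x i))
    rw [hρmult]
  · intro dx dy x y hx hy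
    show A.α (A.br (Fin.snoc (fun k => A.α (x k)) (A.α (A.br y)))) = _
    rw [hsnoc, ← hρmult]
    have hF := hFil dx dy x y hx hy
    unfold NData.act at hF
    rw [hF]
    rw [map_sum, map_sum]
    refine Finset.sum_congr rfl ?_
    intro i _
    rw [LinearMap.map_smul, LinearMap.map_smul]
    congr 1
    show A.α (A.α (A.br (Function.update y i (A.act x (y i)))))
      = A.α (A.br (Function.update (fun k => A.α (y k)) i (A.α (A.br (Fin.snoc x (y i))))))
    congr 1
    rw [hρmult]
    congr 1
    funext k
    rcases eq_or_ne k i with rfl | hk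
    · simp [NData.act]
    · simp [Function.update_of_ne hk]
end

section
/- Let (g,[·,…,·],α) be an n-ary multiplicative Hom-Nambu-Lie superalgebra. Then the bracket [·,·]_α on fundamental objects satisfies the Hom-super-Jacobi identity: [α(𝔵),[𝔶,𝔷]_α]_α = (-1)^{|𝔵||𝔶|}[α(𝔶),[𝔵,𝔷]_α]_α + [[𝔵,𝔶]_α, α(𝔷)]_α for all fundamental objects 𝔵,𝔶,𝔷. -/
open scoped BigOperators

universe u v w

variable (K : Type u) [Field K]

/-- Degrees of the components of `comp x y i`, given the total degree `dx` of `x` and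
the componentwise degrees `dy` of `y`. -/
def compDeg {n : ℕ} (dx : ZMod 2) (dy : Fin (n + 1) → ZMod 2) (i : Fin (n + 1)) :
    Fin (n + 1) → ZMod 2 := Function.update dy i (dx + dy i)


section HSJHelpers

variable {K : Type u} [Field K]

lemma sgn_comm' (a b : ZMod 2) : sgn K a b = sgn K b a := by
  unfold sgn; simp [and_comm]

lemma sgn_mul_self' (a b : ZMod 2) : sgn K a b * sgn K a b = 1 := by
  unfold sgn; split <;> ring

lemma sgn_add_left' (a b c : ZMod 2) : sgn K (a + b) c = sgn K a c * sgn K b c := by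
  have h : ∀ x : ZMod 2, x = 0 ∨ x = 1 := by decide
  rcases h a with ha | ha <;> rcases h b with hb | hb <;> rcases h c with hc | hc <;>
    subst ha <;> subst hb <;> subst hc <;>
    simp only [sgn, show ((1:ZMod 2)+1) = 0 from rfl, show ((0:ZMod 2)+1) = 1 from rfl,
      show ((1:ZMod 2)+0) = 1 from rfl, show ((0:ZMod 2)+0) = 0 from rfl,
      show (0:ZMod 2) ≠ 1 from by decide, ne_eq] <;>
    norm_num

lemma sgn_add_right' (a b c : ZMod 2) : sgn K a (b + c) = sgn K a b * sgn K a c := by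
  rw [sgn_comm', sgn_add_left', sgn_comm' b a, sgn_comm' c a]

lemma psum_update_of_le' {m : ℕ} (d : Fin m → ZMod 2) (j : Fin m) (v : ZMod 2)
    (i : Fin m) (h : i ≤ j) : psum (Function.update d j v) i = psum d i := by
  unfold psum
  refine Finset.sum_congr rfl fun k hk => ?_
  rw [Finset.mem_filter] at hk
  exact Function.update_of_ne (ne_of_lt (lt_of_lt_of_le hk.2 h)) _ _

lemma psum_update_of_lt' {m : ℕ} (d : Fin m → ZMod 2) (j : Fin m) (v : ZMod 2)
    (i : Fin m) (h : j < i) : psum (Function.update d j v) i = psum d i + v - d j := by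
  unfold psum
  have hj : j ∈ Finset.univ.filter (fun k => k < i) := by simp [h]
  rw [Finset.sum_update_of_mem hj, ← Finset.add_sum_erase _ d hj,
    Finset.sdiff_singleton_eq_erase]
  abel

lemma psum_snoc_castSucc' {m : ℕ} (d : Fin (m + 1) → ZMod 2) (c : ZMod 2)
    (i : Fin (m + 1)) : psum (Fin.snoc d c) i.castSucc = psum d i := by
  unfold psum
  rw [Finset.sum_filter, Finset.sum_filter, Fin.sum_univ_castSucc]
  have h1 : ¬ (Fin.last (m + 1) < i.castSucc) := asymm (Fin.castSucc_lt_last i)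
  simp [Fin.snoc_castSucc, Fin.castSucc_lt_castSucc_iff, h1]

lemma psum_snoc_last' {m : ℕ} (d : Fin (m + 1) → ZMod 2) (c : ZMod 2) :
    psum (Fin.snoc d c) (Fin.last (m + 1)) = ∑ k, d k := by
  unfold psum
  rw [Finset.sum_filter, Fin.sum_univ_castSucc]
  simp [Fin.castSucc_lt_last, Fin.snoc_castSucc]

variable {n : ℕ} {g : Type v} [AddCommGroup g] [Module K g] (A : NData K n g)

lemma act_alpha' (hm : A.Mult) (u : Fin (n + 1) → g) (v : g) :
    A.act (fun k => A.α (u k)) (A.α v) = A.α (A.act u v) := by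
  unfold NData.act
  rw [hm]
  congr 1
  funext k
  induction k using Fin.lastCases with
  | last => simp
  | cast k => simp

lemma homog_snoc' {m : ℕ} (d : Fin (m + 1) → ZMod 2) (c : ZMod 2)
    (y : Fin (m + 1) → g) (w : g) (hy : A.Homog y d) (hw : w ∈ A.G c) :
    A.Homog (Fin.snoc y w) (Fin.snoc d c) := by
  intro k
  induction k using Fin.lastCases with
  | last => simpa using hw
  | cast k => simpa using hy k

lemma key_hf' (hf : A.HomFilippov) (dx dy : Fin (n + 1) → ZMod 2) (c : ZMod 2)
    (x y : Fin (n + 1) → g) (w : g) (hx : A.Homog x dx) (hy : A.Homog y dy)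
    (hw : w ∈ A.G c) :
    A.act (fun k => A.α (x k)) (A.act y w)
      = (∑ k, sgn K (∑ m, dx m) (psum dy k) • A.act (A.comp x y k) (A.α w))
        + sgn K (∑ m, dx m) (∑ m, dy m) • A.act (fun k => A.α (y k)) (A.act x w) := by
  have h := hf dx (Fin.snoc dy c) x (Fin.snoc y w) hx (homog_snoc' A dy c y w hy hw)
  have e2 : (fun k' => A.α ((Fin.snoc y w : Fin (n + 2) → g) k')) = Fin.snoc (fun k' => A.α (y k')) (A.α w) := by
    funext k'
    induction k' using Fin.lastCases with
    | last => simp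
    | cast k' => simp
  rw [show A.act y w = A.br (Fin.snoc y w) from rfl, h, Fin.sum_univ_castSucc]
  congr 1
  · refine Finset.sum_congr rfl fun k _ => ?_
    rw [psum_snoc_castSucc']
    congr 1
    rw [e2]
    show A.br _ = A.br (Fin.snoc (A.comp x y k) (A.α w))
    congr 1
    rw [show (Fin.snoc y w : Fin (n + 2) → g) k.castSucc = y k from Fin.snoc_castSucc _ _ _,
      ← Fin.snoc_update]
    rfl
  · rw [psum_snoc_last']
    congr 1
    rw [e2]
    show A.br _ = A.br (Fin.snoc (fun k => A.α (y k)) (A.act x w))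
    congr 1
    rw [show (Fin.snoc y w : Fin (n + 2) → g) (Fin.last (n + 1)) = w from Fin.snoc_last _ _,
      Fin.update_snoc_last]

lemma key_phi' {W' : Type w} [AddCommGroup W'] [Module K W']
    (φ : MultilinearMap K (fun _ : Fin (n + 1) => g) W')
    (hf : A.HomFilippov) (dx dy : Fin (n + 1) → ZMod 2) (c : ZMod 2)
    (x y : Fin (n + 1) → g) (w : g) (hx : A.Homog x dx) (hy : A.Homog y dy)
    (hw : w ∈ A.G c) (W : Fin (n + 1) → g) (j : Fin (n + 1)) :
    φ (Function.update W j (A.act (fun k => A.α (x k)) (A.act y w)))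
      = (∑ k, sgn K (∑ m, dx m) (psum dy k) •
          φ (Function.update W j (A.act (A.comp x y k) (A.α w))))
        + sgn K (∑ m, dx m) (∑ m, dy m) •
          φ (Function.update W j (A.act (fun k => A.α (y k)) (A.act x w))) := by
  have e : ∀ v, φ (Function.update W j v) = φ.toLinearMap W j v := fun _ => rfl
  rw [e, key_hf' A hf dx dy c x y w hx hy hw]
  simp only [map_add, map_sum, map_smul]
  simp only [e]

lemma comp_app_ne' (x y : Fin (n + 1) → g) {i j : Fin (n + 1)} (h : i ≠ j) :
    A.comp x y j i = A.α (y i) := by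
  unfold NData.comp
  rw [Function.update_of_ne h]

lemma comp_app_self' (x y : Fin (n + 1) → g) (j : Fin (n + 1)) :
    A.comp x y j j = A.act x (y j) := by
  unfold NData.comp
  rw [Function.update_self]

lemma alpha_comp' (hm : A.Mult) (x y z : Fin (n + 1) → g) (j : Fin (n + 1)) :
    (fun k => A.α (A.comp y z j k))
      = Function.update (fun k => A.α (A.α (z k))) j (A.α (A.act y (z j))) := by
  funext k
  rcases eq_or_ne k j with hk | hk
  · subst hk
    rw [comp_app_self', Function.update_self]
  · rw [comp_app_ne' A y z hk, Function.update_of_ne hk]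

lemma comp_comp_ne' (hm : A.Mult) (x y z : Fin (n + 1) → g) {i j : Fin (n + 1)} (h : i ≠ j) :
    A.comp (fun k => A.α (x k)) (A.comp y z j) i
      = Function.update (Function.update (fun k => A.α (A.α (z k))) j
          (A.α (A.act y (z j)))) i (A.α (A.act x (z i))) := by
  calc A.comp (fun k => A.α (x k)) (A.comp y z j) i
      = Function.update (fun k => A.α (A.comp y z j k)) i
          (A.act (fun k => A.α (x k)) (A.comp y z j i)) := rfl
    _ = _ := by
        rw [alpha_comp' A hm x y z j, comp_app_ne' A y z h, act_alpha' A hm x (z i)]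

lemma comp_comp_self' (hm : A.Mult) (x y z : Fin (n + 1) → g) (j : Fin (n + 1)) :
    A.comp (fun k => A.α (x k)) (A.comp y z j) j
      = Function.update (fun k => A.α (A.α (z k))) j
          (A.act (fun k => A.α (x k)) (A.act y (z j))) := by
  calc A.comp (fun k => A.α (x k)) (A.comp y z j) j
      = Function.update (fun k => A.α (A.comp y z j k)) j
          (A.act (fun k => A.α (x k)) (A.comp y z j j)) := rfl
    _ = _ := by
        rw [alpha_comp' A hm x y z j, Function.update_idem, comp_app_self']

lemma comp_last' (x y z : Fin (n + 1) → g) (k i : Fin (n + 1)) :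
    A.comp (A.comp x y k) (fun m => A.α (z m)) i
      = Function.update (fun m => A.α (A.α (z m))) i
          (A.act (A.comp x y k) (A.α (z i))) := rfl

end HSJHelpers

/-- The Hom-super-Jacobi identity
`[α(𝔵),[𝔶,𝔷]_α]_α = (-1)^{|𝔵||𝔶|}[α(𝔶),[𝔵,𝔷]_α]_α + [[𝔵,𝔶]_α, α(𝔷)]_α`
in the `(n+1)`-st super wedge power of `g`, expressed via the universal property:
both sides agree after applying any multilinear map `φ` that is super-skew-symmetric
in adjacent homogeneous arguments, expanding all wedge brackets into their
decomposable components. -/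
theorem hom_super_jacobi {K : Type u} [Field K] {n : ℕ} {g : Type v}
    [AddCommGroup g] [Module K g] (A : NData K n g) (hA : A.IsHomNambuLieSuper)
    {W : Type w} [AddCommGroup W] [Module K W]
    (φ : MultilinearMap K (fun _ : Fin (n + 1) => g) W)
    (hφ : ∀ (d : Fin (n + 1) → ZMod 2) (u : Fin (n + 1) → g), A.Homog u d →
      ∀ i j : Fin (n + 1), (i : ℕ) + 1 = (j : ℕ) →
        φ (u ∘ Equiv.swap i j) = -(sgn K (d i) (d j) • φ u))
    (dx dy dz : Fin (n + 1) → ZMod 2) (x y z : Fin (n + 1) → g)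
    (hx : A.Homog x dx) (hy : A.Homog y dy) (hz : A.Homog z dz) :
    ∑ j : Fin (n + 1), ∑ i : Fin (n + 1),
        (sgn K (∑ k, dy k) (psum dz j)
          * sgn K (∑ k, dx k) (psum (compDeg (∑ k, dy k) dz j) i)) •
        φ (A.comp (fun k => A.α (x k)) (A.comp y z j) i)
      = sgn K (∑ k, dx k) (∑ k, dy k) •
          ∑ j : Fin (n + 1), ∑ i : Fin (n + 1),
            (sgn K (∑ k, dx k) (psum dz j)
              * sgn K (∑ k, dy k) (psum (compDeg (∑ k, dx k) dz j) i)) •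
            φ (A.comp (fun k => A.α (y k)) (A.comp x z j) i)
        + ∑ i : Fin (n + 1), ∑ j : Fin (n + 1),
            (sgn K ((∑ k, dx k) + ∑ k, dy k) (psum dz i)
              * sgn K (∑ k, dx k) (psum dy j)) •
            φ (A.comp (A.comp x y j) (fun k => A.α (z k)) i) := by
  obtain ⟨-, -, -, hm, hhf⟩ := hA
  have split : ∀ F : Fin (n + 1) → Fin (n + 1) → W,
      (∑ j, ∑ i, F j i) = (∑ j, F j j) + ∑ j, ∑ i ∈ Finset.univ.erase j, F j i := by
    intro F
    rw [← Finset.sum_add_distrib]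
    exact Finset.sum_congr rfl fun j _ => (Finset.add_sum_erase _ _ (Finset.mem_univ j)).symm
  have eL : (∑ j, ∑ i, (sgn K (∑ k, dy k) (psum dz j) * sgn K (∑ k, dx k) (psum (compDeg (∑ k, dy k) dz j) i)) • φ (A.comp (fun k => A.α (x k)) (A.comp y z j) i))
      = (∑ j, (sgn K (∑ k, dy k) (psum dz j) * sgn K (∑ k, dx k) (psum (compDeg (∑ k, dy k) dz j) j)) • φ (A.comp (fun k => A.α (x k)) (A.comp y z j) j)) + ∑ j, ∑ i ∈ Finset.univ.erase j, (sgn K (∑ k, dy k) (psum dz j) * sgn K (∑ k, dx k) (psum (compDeg (∑ k, dy k) dz j) i)) • φ (A.comp (fun k => A.α (x k)) (A.comp y z j) i) := split _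
  have eR : (∑ j, ∑ i, (sgn K (∑ k, dx k) (psum dz j) * sgn K (∑ k, dy k) (psum (compDeg (∑ k, dx k) dz j) i)) • φ (A.comp (fun k => A.α (y k)) (A.comp x z j) i))
      = (∑ j, (sgn K (∑ k, dx k) (psum dz j) * sgn K (∑ k, dy k) (psum (compDeg (∑ k, dx k) dz j) j)) • φ (A.comp (fun k => A.α (y k)) (A.comp x z j) j)) + ∑ j, ∑ i ∈ Finset.univ.erase j, (sgn K (∑ k, dx k) (psum dz j) * sgn K (∑ k, dy k) (psum (compDeg (∑ k, dx k) dz j) i)) • φ (A.comp (fun k => A.α (y k)) (A.comp x z j) i) := split _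
  have hdiagj : ∀ j : Fin (n + 1), (sgn K (∑ k, dy k) (psum dz j) * sgn K (∑ k, dx k) (psum (compDeg (∑ k, dy k) dz j) j)) • φ (A.comp (fun k => A.α (x k)) (A.comp y z j) j)
      = (∑ k, (sgn K (∑ k, dy k) (psum dz j) * sgn K (∑ k, dx k) (psum dz j) * sgn K (∑ k, dx k) (psum dy k)) • φ (Function.update (fun k => A.α (A.α (z k))) j (A.act (A.comp x y k) (A.α (z j))))) + (sgn K (∑ k, dy k) (psum dz j) * sgn K (∑ k, dx k) (psum dz j) * sgn K (∑ k, dx k) (∑ k, dy k)) • φ (Function.update (fun k => A.α (A.α (z k))) j (A.act (fun k => A.α (y k)) (A.act x (z j)))) := by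
    intro j
    rw [show psum (compDeg (∑ k, dy k) dz j) j = psum dz j from
        psum_update_of_le' dz j _ j le_rfl,
      comp_comp_self' A hm x y z j,
      key_phi' A φ hhf dx dy (dz j) x y (z j) hx hy (hz j) (fun k => A.α (A.α (z k))) j,
      smul_add, Finset.smul_sum]
    congr 1
    · exact Finset.sum_congr rfl fun k _ => by rw [smul_smul]
    · rw [smul_smul]
  have hA1 : (∑ j, ∑ k, (sgn K (∑ k, dy k) (psum dz j) * sgn K (∑ k, dx k) (psum dz j) * sgn K (∑ k, dx k) (psum dy k)) • φ (Function.update (fun k => A.α (A.α (z k))) j (A.act (A.comp x y k) (A.α (z j))))) = ∑ i, ∑ j, (sgn K ((∑ k, dx k) + ∑ k, dy k) (psum dz i) * sgn K (∑ k, dx k) (psum dy j)) • φ (A.comp (A.comp x y j) (fun k => A.α (z k)) i) := by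
    refine Finset.sum_congr rfl fun i _ => Finset.sum_congr rfl fun k _ => ?_
    rw [comp_last' A x y z k i, sgn_add_left']
    congr 1
    ring
  have hB : (∑ j, (sgn K (∑ k, dy k) (psum dz j) * sgn K (∑ k, dx k) (psum dz j) * sgn K (∑ k, dx k) (∑ k, dy k)) • φ (Function.update (fun k => A.α (A.α (z k))) j (A.act (fun k => A.α (y k)) (A.act x (z j))))) = sgn K (∑ k, dx k) (∑ k, dy k) • ∑ j, (sgn K (∑ k, dx k) (psum dz j) * sgn K (∑ k, dy k) (psum (compDeg (∑ k, dx k) dz j) j)) • φ (A.comp (fun k => A.α (y k)) (A.comp x z j) j) := by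
    rw [Finset.smul_sum]
    refine Finset.sum_congr rfl fun j _ => ?_
    rw [show psum (compDeg (∑ k, dx k) dz j) j = psum dz j from
        psum_update_of_le' dz j _ j le_rfl,
      comp_comp_self' A hm y x z j, smul_smul]
    congr 1
    ring
  have hoff : (∑ j, ∑ i ∈ Finset.univ.erase j, (sgn K (∑ k, dy k) (psum dz j) * sgn K (∑ k, dx k) (psum (compDeg (∑ k, dy k) dz j) i)) • φ (A.comp (fun k => A.α (x k)) (A.comp y z j) i))
      = sgn K (∑ k, dx k) (∑ k, dy k) • ∑ j, ∑ i ∈ Finset.univ.erase j, (sgn K (∑ k, dx k) (psum dz j) * sgn K (∑ k, dy k) (psum (compDeg (∑ k, dx k) dz j) i)) • φ (A.comp (fun k => A.α (y k)) (A.comp x z j) i) := by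
    have h1 : ∀ j : Fin (n + 1), ∀ i ∈ Finset.univ.erase j,
        (sgn K (∑ k, dy k) (psum dz j) * sgn K (∑ k, dx k) (psum (compDeg (∑ k, dy k) dz j) i)) • φ (A.comp (fun k => A.α (x k)) (A.comp y z j) i) = sgn K (∑ k, dx k) (∑ k, dy k) • (sgn K (∑ k, dx k) (psum dz i) * sgn K (∑ k, dy k) (psum (compDeg (∑ k, dx k) dz i) j)) • φ (A.comp (fun k => A.α (y k)) (A.comp x z i) j) := by
      intro j i hi
      have hij : i ≠ j := Finset.ne_of_mem_erase hi
      rw [comp_comp_ne' A hm x y z hij, comp_comp_ne' A hm y x z hij.symm,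
        Function.update_comm hij]
      rcases lt_or_gt_of_ne hij with hlt | hgt
      · rw [show psum (compDeg (∑ k, dy k) dz j) i = psum dz i from
            psum_update_of_le' dz j _ i hlt.le,
          show psum (compDeg (∑ k, dx k) dz i) j = psum dz j + (∑ k, dx k) from by
            unfold compDeg
            rw [psum_update_of_lt' dz i _ j hlt]; ring,
          sgn_add_right', smul_smul]
        congr 1
        rw [sgn_comm' (∑ k, dy k) (∑ k, dx k)]
        linear_combination (-(sgn K (∑ k, dy k) (psum dz j) * sgn K (∑ k, dx k) (psum dz i))) *
          sgn_mul_self' (K := K) (∑ k, dx k) (∑ k, dy k)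
      · rw [show psum (compDeg (∑ k, dy k) dz j) i = psum dz i + (∑ k, dy k) from by
            unfold compDeg
            rw [psum_update_of_lt' dz j _ i hgt]; ring,
          show psum (compDeg (∑ k, dx k) dz i) j = psum dz j from
            psum_update_of_le' dz i _ j hgt.le,
          sgn_add_right', smul_smul]
        congr 1
        ring
    calc (∑ j, ∑ i ∈ Finset.univ.erase j, (sgn K (∑ k, dy k) (psum dz j) * sgn K (∑ k, dx k) (psum (compDeg (∑ k, dy k) dz j) i)) • φ (A.comp (fun k => A.α (x k)) (A.comp y z j) i))
        = ∑ j, ∑ i ∈ Finset.univ.erase j, sgn K (∑ k, dx k) (∑ k, dy k) • (sgn K (∑ k, dx k) (psum dz i) * sgn K (∑ k, dy k) (psum (compDeg (∑ k, dx k) dz i) j)) • φ (A.comp (fun k => A.α (y k)) (A.comp x z i) j) :=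
          Finset.sum_congr rfl fun j _ => Finset.sum_congr rfl (h1 j)
      _ = ∑ i, ∑ j ∈ Finset.univ.erase i, sgn K (∑ k, dx k) (∑ k, dy k) • (sgn K (∑ k, dx k) (psum dz i) * sgn K (∑ k, dy k) (psum (compDeg (∑ k, dx k) dz i) j)) • φ (A.comp (fun k => A.α (y k)) (A.comp x z i) j) :=
          Finset.sum_comm' (by
            intro a b
            simp only [Finset.mem_univ, Finset.mem_erase, and_true, true_and]
            exact ne_comm)
      _ = sgn K (∑ k, dx k) (∑ k, dy k) • ∑ j, ∑ i ∈ Finset.univ.erase j, (sgn K (∑ k, dx k) (psum dz j) * sgn K (∑ k, dy k) (psum (compDeg (∑ k, dx k) dz j) i)) • φ (A.comp (fun k => A.α (y k)) (A.comp x z j) i) := by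
          simp only [Finset.smul_sum]
  rw [eL, eR, smul_add,
    show (∑ j, (sgn K (∑ k, dy k) (psum dz j) * sgn K (∑ k, dx k) (psum (compDeg (∑ k, dy k) dz j) j)) • φ (A.comp (fun k => A.α (x k)) (A.comp y z j) j)) = (∑ j, ∑ k, (sgn K (∑ k, dy k) (psum dz j) * sgn K (∑ k, dx k) (psum dz j) * sgn K (∑ k, dx k) (psum dy k)) • φ (Function.update (fun k => A.α (A.α (z k))) j (A.act (A.comp x y k) (A.α (z j))))) + ∑ j, (sgn K (∑ k, dy k) (psum dz j) * sgn K (∑ k, dx k) (psum dz j) * sgn K (∑ k, dx k) (∑ k, dy k)) • φ (Function.update (fun k => A.α (A.α (z k))) j (A.act (fun k => A.α (y k)) (A.act x (z j)))) by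
      rw [← Finset.sum_add_distrib]
      exact Finset.sum_congr rfl fun j _ => hdiagj j,
    hA1, hB, hoff]
  abel
end

section
/- Let T*_θ g be a T*-extension of an n-ary multiplicative Hom-Nambu-Lie superalgebra g. If g is solvable of length k, then T*_θ g is solvable of length k or k+1. -/
open scoped BigOperators

universe u v w

variable (K : Type u) [Field K]

section Aux

variable {K : Type u} [Field K] {n : ℕ} {g : Type v} [AddCommGroup g] [Module K g]

/-- If every coordinate lies in the span of `s`, a multilinear map's value lies in the span
of its values on tuples from `s`. -/
lemma mspan_aux {m : ℕ} {g' : Type w} [AddCommGroup g'] [Module K g']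
    (f : MultilinearMap K (fun _ : Fin m => g) g') (s : Set g) :
    ∀ (j : ℕ) (p : Fin m → g), (∀ i, p i ∈ Submodule.span K s) →
      (∀ i : Fin m, j ≤ (i : ℕ) → p i ∈ s) →
      f p ∈ Submodule.span K {y | ∃ q : Fin m → g, (∀ i, q i ∈ s) ∧ y = f q} := by
  intro j
  induction j with
  | zero =>
    intro p _ hs
    exact Submodule.subset_span ⟨p, fun i => hs i (Nat.zero_le _), rfl⟩
  | succ j ih =>
    intro p hp hs
    by_cases hj : j < m
    · set J : Fin m := ⟨j, hj⟩ with hJ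
      have key : ∀ x, x ∈ Submodule.span K s →
          f (Function.update p J x) ∈
            Submodule.span K {y | ∃ q : Fin m → g, (∀ i, q i ∈ s) ∧ y = f q} := by
        intro x hx
        induction hx using Submodule.span_induction with
        | mem x hxs =>
          apply ih
          · intro i
            by_cases h : i = J
            · subst h; simpa using Submodule.subset_span hxs
            · rw [Function.update_of_ne h]; exact hp i
          · intro i hi
            by_cases h : i = J
            · subst h; simpa using hxs
            · rw [Function.update_of_ne h]
              refine hs i ?_
              have : (i : ℕ) ≠ j := fun hij => h (Fin.ext hij)
              omega
        | zero => rw [f.map_update_zero]; exact Submodule.zero_mem _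
        | add x y _ _ hx hy => rw [f.map_update_add]; exact Submodule.add_mem _ hx hy
        | smul c x _ hx => rw [f.map_update_smul]; exact Submodule.smul_mem _ _ hx
      have := key (p J) (hp J)
      rwa [Function.update_eq_self] at this
    · exact ih p hp (fun i hi => hs i (by omega))

lemma tds_fst_mem (A : NData K n g) (θ : (Fin (n + 2) → g) → Module.Dual K g) :
    ∀ m, ∀ u ∈ A.tds θ m, u.1 ∈ A.ds m := by
  intro m
  induction m with
  | zero => intro u _; trivial
  | succ m ih =>
    intro u hu
    have hu' : u ∈ Submodule.span K
        {u | ∃ (d : Fin (n + 2) → ZMod 2) (p : Fin (n + 2) → g × Module.Dual K g),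
          (∀ i, p i ∈ A.tG (d i)) ∧ (∀ i, p i ∈ A.tds θ m) ∧ u = A.tbr θ d p} := hu
    clear hu
    induction hu' using Submodule.span_induction with
    | mem u hu =>
      obtain ⟨d, p, _, hpS, rfl⟩ := hu
      exact Submodule.subset_span ⟨fun i => (p i).1, fun i => ih _ (hpS i), rfl⟩
    | zero => exact Submodule.zero_mem _
    | add x y _ _ hx hy => exact Submodule.add_mem _ hx hy
    | smul c x _ hx => exact Submodule.smul_mem _ _ hx

lemma theta_zero (A : NData K n g) (θ : (Fin (n + 2) → g) → Module.Dual K g)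
    (hθ : A.TZ1 θ) : θ (fun _ => 0) = 0 := by
  have hhom : ∀ d : Fin (n + 2) → ZMod 2, A.Homog (fun _ => (0 : g)) d :=
    fun d i => Submodule.zero_mem _
  have h0 := hθ.1 (fun _ => 0) (fun _ => 0) (hhom _)
  have h1 := hθ.1 (Fin.cons 1 (fun _ => 0)) (fun _ => 0) (hhom _)
  have hs0 : (∑ i : Fin (n + 2), (0 : ZMod 2)) = 0 := by simp
  have hs1 : (∑ i : Fin (n + 2), (Fin.cons 1 (fun _ => 0) : Fin (n + 2) → ZMod 2) i) = 1 := by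
    simp [Fin.sum_univ_succ]
  rw [hs0] at h0
  rw [hs1] at h1
  -- θ vanishes on each G d
  have hker : ∀ d : ZMod 2, A.G d ≤ LinearMap.ker (θ (fun _ => 0)) := by
    intro d
    have hd : d = 0 ∨ d = 1 := by revert d; decide
    intro x hx
    rcases hd with rfl | rfl
    · exact h1 x (by simpa [show (1 : ZMod 2) + 1 = 0 from by decide] using hx)
    · exact h0 x (by simpa using hx)
  have htop : (⊤ : Submodule K g) ≤ LinearMap.ker (θ (fun _ => 0)) := by
    rw [← A.internal.submodule_iSup_eq_top]
    exact iSup_le hker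
  ext x
  exact htop (Submodule.mem_top : x ∈ ⊤)

/-- The key set: homogeneous elements of `g` admitting a degree-matched lift into `tds`. -/
def Sset (A : NData K n g) (θ : (Fin (n + 2) → g) → Module.Dual K g) (m : ℕ) : Set g :=
  {x | ∃ (d : ZMod 2) (f : Module.Dual K g),
    x ∈ A.G d ∧ f ∈ A.dualG d ∧ (x, f) ∈ A.tds θ m}

lemma ds_le_span_Sset (A : NData K n g) (hA : A.IsHomNambuLieSuper)
    (θ : (Fin (n + 2) → g) → Module.Dual K g) (hθ : A.TZ1 θ) :
    ∀ m, A.ds m ≤ Submodule.span K (Sset A θ m) := by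
  have h2 : ∀ a : ZMod 2, a + a = 0 := by decide
  intro m
  induction m with
  | zero =>
    rw [show A.ds 0 = ⊤ from rfl, ← A.internal.submodule_iSup_eq_top]
    refine iSup_le fun d => ?_
    intro x hx
    exact Submodule.subset_span ⟨d, 0, hx, Submodule.zero_mem _, Submodule.mem_top⟩
  | succ m ih =>
    refine Submodule.span_le.2 ?_
    rintro y ⟨p, hp, rfl⟩
    have hp' : ∀ i, p i ∈ Submodule.span K (Sset A θ m) := fun i => ih (hp i)
    have hstep := mspan_aux A.br (Sset A θ m) (n + 2) p hp'
      (fun i hi => absurd hi (by omega))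
    refine Submodule.span_le.2 ?_ hstep
    rintro y ⟨q, hq, rfl⟩
    -- choose degrees and duals
    choose d f hG hD hT using hq
    refine Submodule.subset_span ⟨∑ i, d i, (A.tbr θ d (fun i => (q i, f i))).2, ?_, ?_, ?_⟩
    · exact hA.1 d q hG
    · -- second component is in dualG (∑ d)
      show _ ∈ A.dualG (∑ i, d i)
      refine Submodule.add_mem _ (hθ.1 d q hG) (Submodule.sum_mem _ fun i _ => ?_)
      refine Submodule.smul_mem _ _ ?_
      show A.coad _ _ _ _ ∈ _
      unfold NData.coad
      refine Submodule.smul_mem _ _ ?_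
      intro z hz
      show f i (A.adE (fun k => (q (i.succAbove k), f (i.succAbove k)).1) z) = 0
      have hadE : A.adE (fun k => q (i.succAbove k)) z
          = A.br (Fin.snoc (fun k => q (i.succAbove k)) z) := by
        simp [NData.adE]
      show f i (A.adE (fun k => q (i.succAbove k)) z) = 0
      rw [hadE]
      have hbr : A.br (Fin.snoc (fun k => q (i.succAbove k)) z) ∈ A.G (d i + 1) := by
        have hhom : A.Homog (Fin.snoc (fun k => q (i.succAbove k)) z)
            (Fin.snoc (fun k => d (i.succAbove k)) ((∑ j, d j) + 1)) := by
          intro j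
          refine Fin.lastCases ?_ ?_ j
          · simpa using hz
          · intro j; simpa using hG (i.succAbove j)
        have := hA.1 _ _ hhom
        have hsum : (∑ j : Fin (n + 2),
            (Fin.snoc (fun k => d (i.succAbove k)) ((∑ j, d j) + 1) : Fin (n+2) → ZMod 2) j)
            = d i + 1 := by
          rw [Fin.sum_univ_castSucc]
          simp only [Fin.snoc_castSucc, Fin.snoc_last]
          have hh : (∑ j, d j) = d i + ∑ k, d (i.succAbove k) :=
            Fin.sum_univ_succAbove d i
          rw [hh]
          linear_combination h2 (∑ k, d (i.succAbove k))
        rwa [hsum] at this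
      exact hD i _ hbr
    · -- the lift is in tds θ (m+1)
      exact Submodule.subset_span
        ⟨d, fun i => (q i, f i), fun i => ⟨hG i, hD i⟩, fun i => hT i, by
          refine Prod.ext ?_ rfl
          rfl⟩

end Aux

/-- If `g` is solvable of length `k`, then the `T*`-extension
`T*_θ g` is solvable of length `k` or `k + 1`. -/
theorem textension_solvable {K : Type u} [Field K] {n : ℕ} {g : Type v}
    [AddCommGroup g] [Module K g] (A : NData K n g) (hA : A.IsHomNambuLieSuper)
    (θ : (Fin (n + 2) → g) → Module.Dual K g) (hθ : A.TZ1 θ) (hcyc : A.TCyclic θ)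
    (k : ℕ) (hk : A.SolvLength k) :
    A.TSolvLength θ k ∨ A.TSolvLength θ (k + 1) := by
  obtain ⟨hdk, hdj⟩ := hk
  -- tds j ≠ ⊥ for j < k
  have hne : ∀ j < k, A.tds θ j ≠ ⊥ := by
    intro j hj hbot
    refine hdj j hj ?_
    refine le_bot_iff.1 ((ds_le_span_Sset A hA θ hθ j).trans ?_)
    refine Submodule.span_le.2 ?_
    rintro x ⟨d, f, _, _, hT⟩
    rw [hbot, Submodule.mem_bot] at hT
    have : x = 0 := congrArg Prod.fst hT
    simp [this, Submodule.zero_mem]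
  -- tds (k+1) = ⊥
  have htop : A.tds θ (k + 1) = ⊥ := by
    refine le_bot_iff.1 ?_
    show A.tbrAll θ (A.tds θ k) ≤ ⊥
    refine Submodule.span_le.2 ?_
    rintro u ⟨d, p, _, hpS, rfl⟩
    have hp1 : ∀ i, (p i).1 = 0 := by
      intro i
      have := tds_fst_mem A θ k (p i) (hpS i)
      rw [hdk, Submodule.mem_bot] at this
      exact this
    have hfun : (fun i => (p i).1) = (fun _ => (0 : g)) := funext hp1
    have hbr0 : A.br (fun _ => (0 : g)) = 0 := A.br.map_coord_zero 0 rfl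
    have had0 : A.adE (fun _ => (0 : g)) = 0 := A.adE.map_coord_zero 0 rfl
    have hθ0 : θ (fun _ => (0 : g)) = 0 := theta_zero A θ hθ
    show A.tbr θ d p ∈ (⊥ : Submodule K (g × Module.Dual K g))
    rw [Submodule.mem_bot]
    unfold NData.tbr
    refine Prod.ext ?_ ?_
    · show A.br (fun i => (p i).1) = 0
      rw [hfun, hbr0]
    · show θ (fun i => (p i).1) + _ = 0
      rw [hfun, hθ0]
      rw [zero_add]
      refine Finset.sum_eq_zero fun i _ => ?_
      have hfun' : (fun k => (p (i.succAbove k)).1) = (fun _ => (0 : g)) :=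
        funext fun k => hp1 _
      show _ • A.coad _ _ (fun k => (p (i.succAbove k)).1) ((p i).2) = 0
      rw [hfun']
      unfold NData.coad
      rw [had0]
      simp
  by_cases hbk : A.tds θ k = ⊥
  · exact Or.inl ⟨hbk, hne⟩
  · refine Or.inr ⟨htop, fun j hj => ?_⟩
    rcases Nat.lt_succ_iff_lt_or_eq.1 hj with h' | h'
    · exact hne j h'
    · rw [h']; exact hbk
end

section
/- T*_{θ₁}g is isometrically equivalent to T*_{θ₂}g if and only if there exists θ' ∈ C⁰(g,g*)_0̄ with θ₁ - θ₂ = δθ', θ'(x)∘α = θ'(α(x)), and the induced bilinear form ⟨x,y⟩_{θ'} = ½(θ'(x)(y)+(-1)^{|x||y|}θ'(y)(x)) vanishes identically. -/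
open scoped BigOperators

universe u v w

variable (K : Type u) [Field K]

namespace NData

variable {K : Type u} [Field K] {n : ℕ} {g : Type v} [AddCommGroup g] [Module K g]

/-- The coboundary `δθ'` of a `0`-cochain `θ' : g → g*` (an even linear map), on a
homogeneous tuple with degrees `d`. -/
def tdelta0 (A : NData K n g) (θ' : g →ₗ[K] Module.Dual K g)
    (d : Fin (n + 2) → ZMod 2) (p : Fin (n + 2) → g) : Module.Dual K g :=
  θ' (A.br p)
    - ∑ i : Fin (n + 2), ((-1 : K) ^ (n + 1 - (i : ℕ)) * sgn K (d i) (ssum d i)) •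
        A.coad ((∑ k, d k) + d i) (d i) (fun k => p (i.succAbove k)) (θ' (p i))

/-- `T*_{θ₁} g` and `T*_{θ₂} g` are equivalent: there is an isomorphism of `n`-ary
multiplicative Hom-Nambu-Lie superalgebras restricting to the identity on `g*` and
inducing the identity modulo `g*`. -/
def TEquiv (A : NData K n g) (θ₁ θ₂ : (Fin (n + 2) → g) → Module.Dual K g) : Prop :=
  ∃ φ : (g × Module.Dual K g) ≃ₗ[K] g × Module.Dual K g,
    (∀ f : Module.Dual K g, φ (0, f) = (0, f)) ∧
    (∀ u : g × Module.Dual K g, (φ u).1 = u.1) ∧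
    (∀ u, φ (A.tα u) = A.tα (φ u)) ∧
    (∀ (d : Fin (n + 2) → ZMod 2) (p : Fin (n + 2) → g × Module.Dual K g),
      (∀ i, p i ∈ A.tG (d i)) → φ (A.tbr θ₁ d p) = A.tbr θ₂ d fun i => φ (p i))

/-- `T*_{θ₁} g` and `T*_{θ₂} g` are isometrically equivalent: equivalent via an
isomorphism preserving the canonical pairings. -/
def TEquivIsom (A : NData K n g) (θ₁ θ₂ : (Fin (n + 2) → g) → Module.Dual K g) : Prop :=
  ∃ φ : (g × Module.Dual K g) ≃ₗ[K] g × Module.Dual K g,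
    (∀ f : Module.Dual K g, φ (0, f) = (0, f)) ∧
    (∀ u : g × Module.Dual K g, (φ u).1 = u.1) ∧
    (∀ u, φ (A.tα u) = A.tα (φ u)) ∧
    (∀ (d : Fin (n + 2) → ZMod 2) (p : Fin (n + 2) → g × Module.Dual K g),
      (∀ i, p i ∈ A.tG (d i)) → φ (A.tbr θ₁ d p) = A.tbr θ₂ d fun i => φ (p i)) ∧
    (∀ (d₁ d₂ : ZMod 2) (u v : g × Module.Dual K g), u ∈ A.tG d₁ → v ∈ A.tG d₂ →
      A.tpair d₁ d₂ (φ u) (φ v) = A.tpair d₁ d₂ u v)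

/-- The bilinear form `⟨x,y⟩_{θ'} = ½(θ'(x)(y) + (-1)^{|x||y|} θ'(y)(x))` induced by a
`0`-cochain `θ'`, on homogeneous elements of degrees `dx`, `dy`. -/
def indForm (_A : NData K n g) (θ' : g →ₗ[K] Module.Dual K g)
    (dx dy : ZMod 2) (x y : g) : K :=
  (2 : K)⁻¹ * (θ' x y + sgn K dx dy * θ' y x)

end NData


section AuxStuff

variable {K : Type u} [Field K] {n : ℕ} {g : Type v} [AddCommGroup g] [Module K g]

lemma zmod2_add_self' (a : ZMod 2) : a + a = 0 := by revert a; decide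
lemma zmod2_cases' (a : ZMod 2) : a = 0 ∨ a = 1 := by revert a; decide
lemma zmod2_succ_ne' (a : ZMod 2) : a + 1 ≠ a := by revert a; decide
lemma zmod2_succ_succ' (a : ZMod 2) : a + 1 + 1 = a := by revert a; decide
lemma zmod2_ne_imp' (a b : ZMod 2) : a ≠ b → a = b + 1 := by revert a b; decide

namespace NData

variable (A : NData K n g)

lemma mem_dualG' {D : ZMod 2} {f : Module.Dual K g} :
    f ∈ A.dualG D ↔ ∀ x ∈ A.G (D + 1), f x = 0 := Iff.rfl

noncomputable def proj' (d : ZMod 2) : g →ₗ[K] g :=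
  (A.G d).subtype ∘ₗ (DirectSum.component K (ZMod 2) (fun e => A.G e) d) ∘ₗ
    (LinearEquiv.ofBijective (DirectSum.coeLinearMap A.G) A.internal).symm.toLinearMap

lemma proj'_mem (d : ZMod 2) (x : g) : A.proj' d x ∈ A.G d :=
  ((DirectSum.component K (ZMod 2) (fun e => A.G e) d) _).2

lemma symm_eq' {d : ZMod 2} {x : g} (hx : x ∈ A.G d) :
    (LinearEquiv.ofBijective (DirectSum.coeLinearMap A.G) A.internal).symm x
      = DirectSum.lof K (ZMod 2) (fun e => (A.G e)) d ⟨x, hx⟩ := by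
  rw [LinearEquiv.symm_apply_eq]
  change x = DirectSum.coeLinearMap A.G (DirectSum.lof K (ZMod 2) (fun e => (A.G e)) d ⟨x, hx⟩)
  rw [DirectSum.lof_eq_of,
    DirectSum.coeLinearMap_of]

lemma proj'_eq_self {d : ZMod 2} {x : g} (hx : x ∈ A.G d) : A.proj' d x = x := by
  simp only [proj', LinearMap.comp_apply, LinearEquiv.coe_coe, A.symm_eq' hx,
    DirectSum.component.lof_self, Submodule.coe_subtype]

lemma proj'_succ_self {d : ZMod 2} {x : g} (hx : x ∈ A.G d) : A.proj' (d + 1) x = 0 := by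
  simp only [proj', LinearMap.comp_apply, LinearEquiv.coe_coe, A.symm_eq' hx,
    DirectSum.component.of, Submodule.coe_subtype]
  rw [dif_neg (Ne.symm (zmod2_succ_ne' d))]
  rfl

lemma proj'_pair (d : ZMod 2) (x : g) : A.proj' d x + A.proj' (d + 1) x = x := by
  have key : A.proj' 0 x + A.proj' 1 x = x := by
    set e := LinearEquiv.ofBijective (DirectSum.coeLinearMap A.G) A.internal with he
    have hx : x = e (e.symm x) := (e.apply_symm_apply x).symm
    conv_rhs => rw [hx]
    have h2 : e (e.symm x) = DirectSum.coeLinearMap A.G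
        (∑ i : ZMod 2, DirectSum.of _ i ((e.symm x) i)) := by
      rw [DirectSum.sum_univ_of]; rfl
    rw [h2, map_sum]
    have huniv : (Finset.univ : Finset (ZMod 2)) = {0, 1} := by decide
    rw [huniv, Finset.sum_insert (by decide), Finset.sum_singleton]
    simp only [DirectSum.coeLinearMap_of]
    rfl
  rcases zmod2_cases' d with h | h <;> subst h
  · exact key
  · rw [show (1 + 1 : ZMod 2) = 0 by decide, add_comm]; exact key

lemma proj'_decomp {d : ZMod 2} {a b : g} (ha : a ∈ A.G d) (hb : b ∈ A.G (d + 1)) :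
    A.proj' d (a + b) = a := by
  rw [map_add, A.proj'_eq_self ha]
  have h0 : A.proj' ((d + 1) + 1) b = 0 := A.proj'_succ_self hb
  rw [zmod2_succ_succ'] at h0
  rw [h0, add_zero]

lemma proj'_comm (L : g →ₗ[K] g) (D : ZMod 2)
    (hL : ∀ (e : ZMod 2) (x : g), x ∈ A.G e → L x ∈ A.G (e + D)) (b : ZMod 2) (z : g) :
    A.proj' b (L z) = L (A.proj' (b + D) z) := by
  have hz := A.proj'_pair (b + D) z
  have h1 : L (A.proj' (b + D) z) ∈ A.G b := by
    have h := hL _ _ (A.proj'_mem (b + D) z)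
    rwa [add_assoc, zmod2_add_self', add_zero] at h
  have h2 : L (A.proj' (b + D + 1) z) ∈ A.G (b + 1) := by
    have h := hL _ _ (A.proj'_mem (b + D + 1) z)
    rwa [show b + D + 1 + D = b + 1 + (D + D) by ring, zmod2_add_self', add_zero] at h
  calc A.proj' b (L z) = A.proj' b (L (A.proj' (b + D) z) + L (A.proj' (b + D + 1) z)) := by
        rw [← map_add, hz]
    _ = L (A.proj' (b + D) z) := A.proj'_decomp h1 h2

lemma dualG_comp_proj' {D : ZMod 2} {f : Module.Dual K g} (hf : f ∈ A.dualG D) :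
    (A.proj' D).dualMap f = f := by
  ext z
  rw [LinearMap.dualMap_apply]
  conv_rhs => rw [← A.proj'_pair D z]
  rw [map_add, (A.mem_dualG').1 hf _ (A.proj'_mem (D + 1) z), add_zero]

lemma coad_sub' (a b : ZMod 2) (q : Fin (n + 1) → g) (f h : Module.Dual K g) :
    A.coad a b q (f - h) = A.coad a b q f - A.coad a b q h := by
  simp only [NData.coad, LinearMap.sub_comp]
  module

lemma coad_zero' (a b : ZMod 2) (q : Fin (n + 1) → g) :
    A.coad a b q 0 = 0 := by
  simp [NData.coad]

lemma coad_neg' (a b : ZMod 2) (q : Fin (n + 1) → g) (f : Module.Dual K g) :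
    A.coad a b q (-f) = -A.coad a b q f := by
  simp only [NData.coad, LinearMap.neg_comp]
  module

noncomputable def evenPart (t : g →ₗ[K] Module.Dual K g) : g →ₗ[K] Module.Dual K g :=
  (A.proj' 0).dualMap ∘ₗ t ∘ₗ A.proj' 0 + (A.proj' 1).dualMap ∘ₗ t ∘ₗ A.proj' 1

lemma evenPart_homog (t : g →ₗ[K] Module.Dual K g) {d : ZMod 2} {x : g} (hx : x ∈ A.G d) :
    A.evenPart t x = (A.proj' d).dualMap (t x) := by
  rcases zmod2_cases' d with h | h <;> subst h
  · have h1 : A.proj' 1 x = 0 := by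
      have h2 := A.proj'_succ_self hx; rwa [zero_add] at h2
    simp [evenPart, A.proj'_eq_self hx, h1]
  · have h0 : A.proj' 0 x = 0 := by
      have h2 := A.proj'_succ_self hx
      rwa [show (1 + 1 : ZMod 2) = 0 by decide] at h2
    simp [evenPart, A.proj'_eq_self hx, h0]

/-- Homogeneity of a snoc tuple. -/
lemma homog_snoc {m : ℕ} {q : Fin m → g} {dq : Fin m → ZMod 2} {x : g} {e : ZMod 2}
    (hq : A.Homog q dq) (hx : x ∈ A.G e) :
    A.Homog (Fin.snoc q x) (Fin.snoc dq e) := by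
  intro i
  refine Fin.lastCases ?_ ?_ i
  · simpa using hx
  · intro k; simpa using hq k

def shear (t : g →ₗ[K] Module.Dual K g) :
    (g × Module.Dual K g) ≃ₗ[K] g × Module.Dual K g where
  toFun u := (u.1, u.2 - t u.1)
  invFun u := (u.1, u.2 + t u.1)
  map_add' u v := by simp [Prod.ext_iff]; abel
  map_smul' c u := by simp [Prod.ext_iff, smul_sub]
  left_inv u := by simp
  right_inv u := by simp

lemma shear_apply (t : g →ₗ[K] Module.Dual K g) (u : g × Module.Dual K g) :
    shear t u = (u.1, u.2 - t u.1) := rfl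

end NData

end AuxStuff

/-- `T*_{θ₁} g` is isometrically equivalent to `T*_{θ₂} g` iff there
is `θ' ∈ C⁰(g,g*)₀` with `θ₁ - θ₂ = δθ'`, `θ'(x) ∘ α = θ'(α(x))`, and vanishing
induced bilinear form `⟨,⟩_{θ'}`. -/
theorem textension_isom_equiv_iff {K : Type u} [Field K] (hchar : (2 : K) ≠ 0)
    {n : ℕ} {g : Type v} [AddCommGroup g] [Module K g]
    (A : NData K n g) (hA : A.IsHomNambuLieSuper)
    (θ₁ θ₂ : (Fin (n + 2) → g) → Module.Dual K g)
    (hθ₁ : A.TZ1 θ₁) (hθ₂ : A.TZ1 θ₂) (hc₁ : A.TCyclic θ₁) (hc₂ : A.TCyclic θ₂) :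
    A.TEquivIsom θ₁ θ₂ ↔
      ∃ θ' : g →ₗ[K] Module.Dual K g,
        (∀ (d : ZMod 2) (x : g), x ∈ A.G d → θ' x ∈ A.dualG d) ∧
        (∀ (d : Fin (n + 2) → ZMod 2) (p : Fin (n + 2) → g), A.Homog p d →
          θ₁ p - θ₂ p = A.tdelta0 θ' d p) ∧
        (∀ x : g, (θ' x).comp A.α = θ' (A.α x)) ∧
        (∀ (dx dy : ZMod 2) (x y : g), x ∈ A.G dx → y ∈ A.G dy →
          A.indForm θ' dx dy x y = 0) := by
  constructor
  · rintro ⟨φ, h0, h1, hα, hbr, hpair⟩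
    set t : g →ₗ[K] Module.Dual K g :=
      -((LinearMap.snd K g (Module.Dual K g)) ∘ₗ
          (φ : g × Module.Dual K g →ₗ[K] g × Module.Dual K g) ∘ₗ
          (LinearMap.inl K g (Module.Dual K g))) with ht
    have hφ : ∀ (x : g) (f : Module.Dual K g), φ (x, f) = (x, f - t x) := by
      intro x f
      have hsplit : ((x, f) : g × Module.Dual K g) = (x, 0) + (0, f) := by simp
      have hx2 : φ (x, (0 : Module.Dual K g)) = (x, -t x) := by
        refine Prod.ext (h1 _) ?_
        simp [ht]
      rw [hsplit, map_add, h0, hx2]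
      refine Prod.ext (by simp) ?_
      show -t x + f = f - t x
      abel
    have R3 : ∀ x : g, (t x).comp A.α = t (A.α x) := by
      intro x
      have h := hα (x, (0 : Module.Dual K g))
      rw [hφ] at h
      have e1 : A.tα ((x, (0 : Module.Dual K g)) : g × Module.Dual K g) = (A.α x, 0) := by
        simp [NData.tα]
      rw [e1, hφ] at h
      have h2 := congrArg Prod.snd h
      simp only [NData.tα, LinearMap.prodMap_apply, zero_sub, map_neg] at h2
      have h3 : t (A.α x) = A.α.dualMap (t x) := neg_injective h2
      ext y
      rw [LinearMap.comp_apply, ← LinearMap.dualMap_apply, ← h3]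
    have R4 : ∀ (dx dy : ZMod 2) (x y : g), x ∈ A.G dx → y ∈ A.G dy →
        t x y + sgn K dx dy * t y x = 0 := by
      intro dx dy x y hx hy
      have h := hpair dx dy (x, 0) (y, 0) (Submodule.mem_prod.2 ⟨hx, Submodule.zero_mem _⟩)
        (Submodule.mem_prod.2 ⟨hy, Submodule.zero_mem _⟩)
      rw [hφ, hφ] at h
      simp only [NData.tpair, zero_sub, LinearMap.neg_apply, LinearMap.zero_apply] at h
      linear_combination -h
    have R2 : ∀ (d : Fin (n + 2) → ZMod 2) (p : Fin (n + 2) → g), A.Homog p d →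
        θ₁ p - θ₂ p = A.tdelta0 t d p := by
      intro d x hx
      have hmem : ∀ i, ((x i, (0 : Module.Dual K g)) : g × Module.Dual K g) ∈ A.tG (d i) :=
        fun i => Submodule.mem_prod.2 ⟨hx i, Submodule.zero_mem _⟩
      have h := hbr d (fun i => (x i, 0)) hmem
      simp only [NData.tbr] at h
      simp only [hφ] at h
      simp only [A.coad_zero', smul_zero, Finset.sum_const_zero, add_zero, zero_sub,
        A.coad_neg', smul_neg, Finset.sum_neg_distrib, Prod.mk.injEq] at h
      have h2 := h.2
      rw [NData.tdelta0]
      rw [sub_eq_iff_eq_add] at h2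
      rw [h2]
      abel
    have hBrEven : A.BrEven := hA.1
    have hAlphaEven : A.AlphaEven := hA.2.2.1
    refine ⟨A.evenPart t, ?_, ?_, ?_, ?_⟩
    · intro d x hx
      rw [A.mem_dualG']
      intro y hy
      rw [A.evenPart_homog t hx, LinearMap.dualMap_apply]
      have h0 : A.proj' d y = 0 := by
        have h2 := A.proj'_succ_self hy
        rwa [zmod2_succ_succ'] at h2
      rw [h0, map_zero]
    · intro d p hp
      have key : A.tdelta0 (A.evenPart t) d p
          = (A.proj' (∑ k, d k)).dualMap (A.tdelta0 t d p) := by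
        rw [NData.tdelta0, NData.tdelta0, map_sub, map_sum]
        congr 1
        · exact A.evenPart_homog t (hBrEven d p hp)
        · refine Finset.sum_congr rfl (fun i _ => ?_)
          rw [LinearMap.map_smul]
          congr 1
          rw [A.evenPart_homog t (hp i)]
          have hq : ∀ (e : ZMod 2) (z : g), z ∈ A.G e →
              (A.adE fun k => p (i.succAbove k)) z
                ∈ A.G (e + ∑ k, d (i.succAbove k)) := by
            intro e z hz
            have hsnoc := hBrEven (Fin.snoc (fun k => d (i.succAbove k)) e)
              (Fin.snoc (fun k => p (i.succAbove k)) z)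
              (A.homog_snoc (fun k => hp (i.succAbove k)) hz)
            have hsum : ∑ j, (Fin.snoc (fun k => d (i.succAbove k)) e : Fin (n + 2) → ZMod 2) j
                = (∑ k, d (i.succAbove k)) + e := by
              simp [Fin.sum_univ_castSucc]
            rw [hsum] at hsnoc
            have hgoal : (A.adE fun k => p (i.succAbove k)) z
                = A.br (Fin.snoc (fun k => p (i.succAbove k)) z) := by
              simp [NData.adE]
            rw [hgoal, add_comm]
            exact hsnoc
          have hcomm : ∀ z : g, A.proj' (d i) ((A.adE fun k => p (i.succAbove k)) z)
              = (A.adE fun k => p (i.succAbove k)) (A.proj' (∑ k, d k) z) := by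
            intro z
            have h := A.proj'_comm (A.adE fun k => p (i.succAbove k))
              (∑ k, d (i.succAbove k)) hq (d i) z
            rw [h]
            congr 1
            rw [Fin.sum_univ_succAbove d i]
          ext z
          simp only [NData.coad, LinearMap.smul_apply, LinearMap.neg_apply,
            LinearMap.comp_apply, LinearMap.dualMap_apply, smul_eq_mul]
          rw [hcomm z]
      rw [key, ← R2 d p hp, map_sub, A.dualG_comp_proj' (hθ₁.1 d p hp),
        A.dualG_comp_proj' (hθ₂.1 d p hp)]
    · intro x
      have hαcomm : ∀ (e : ZMod 2) (z : g), A.proj' e (A.α z) = A.α (A.proj' e z) := by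
        intro e z
        have h := A.proj'_comm A.α 0 (fun e' w hw => by simpa using hAlphaEven e' w hw) e z
        simpa using h
      ext y
      simp only [NData.evenPart, LinearMap.comp_apply, LinearMap.add_apply,
        LinearMap.dualMap_apply]
      rw [hαcomm 0 x, hαcomm 1 x, ← R3, ← R3]
      simp only [LinearMap.comp_apply]
      rw [← hαcomm 0 y, ← hαcomm 1 y]
    · intro dx dy x y hx hy
      rw [NData.indForm, A.evenPart_homog t hx, A.evenPart_homog t hy,
        LinearMap.dualMap_apply, LinearMap.dualMap_apply]
      by_cases hd : dx = dy
      · subst hd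
        rw [A.proj'_eq_self hy, A.proj'_eq_self hx, R4 dx dx x y hx hy, mul_zero]
      · have hp1 : A.proj' dx y = 0 := by
          rw [zmod2_ne_imp' dx dy hd]
          exact A.proj'_succ_self hy
        have hp2 : A.proj' dy x = 0 := by
          rw [zmod2_ne_imp' dy dx (Ne.symm hd)]
          exact A.proj'_succ_self hx
        rw [hp1, hp2]
        simp
  · rintro ⟨t, ht1, ht2, ht3, ht4⟩
    refine ⟨NData.shear t, ?_, fun u => rfl, ?_, ?_, ?_⟩
    · intro f
      rw [NData.shear_apply]
      simp
    · intro u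
      refine Prod.ext rfl ?_
      show (A.tα u).2 - t (A.tα u).1 = (A.tα (NData.shear t u)).2
      simp only [NData.tα, LinearMap.prodMap_apply, NData.shear_apply, map_sub]
      congr 1
      ext y
      rw [LinearMap.dualMap_apply]
      exact (LinearMap.congr_fun (ht3 u.1) y).symm
    · intro d p hp
      have hom : A.Homog (fun i => (p i).1) d := fun i => (Submodule.mem_prod.1 (hp i)).1
      have h2 := ht2 d (fun i => (p i).1) hom
      rw [NData.tdelta0] at h2
      beta_reduce at h2
      refine Prod.ext rfl ?_
      show (A.tbr θ₁ d p).2 - t (A.tbr θ₁ d p).1 = (A.tbr θ₂ d fun i => NData.shear t (p i)).2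
      simp only [NData.tbr, NData.shear_apply, A.coad_sub', smul_sub, Finset.sum_sub_distrib]
      rw [sub_eq_iff_eq_add] at h2
      rw [h2]
      abel
    · intro d₁ d₂ u v hu hv
      have hx := (Submodule.mem_prod.1 hu).1
      have hy := (Submodule.mem_prod.1 hv).1
      have key := ht4 d₁ d₂ u.1 v.1 hx hy
      rw [NData.indForm] at key
      have key2 : (t u.1) v.1 + sgn K d₁ d₂ * (t v.1) u.1 = 0 :=
        (mul_eq_zero.mp key).resolve_left (inv_ne_zero hchar)
      simp only [NData.tpair, NData.shear_apply, LinearMap.sub_apply]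
      linear_combination -key2
end
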